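/- arXiv:0710.1989 — 3 statements merged into one kernel-verified Lean document; each statement's English description precedes it below -/
import Mathlib

section
/- Let A be a solid involutive Banach algebra under convolution of complex sequences on a lattice Λ = Bℤ^d ⊂ ℝ^d (B an invertible d×d matrix). Then A is continuously embedded in ℓ¹(Λ); more precisely, ‖a‖_{ℓ¹(Λ)} ≤ ‖a‖_A for every a ∈ A. -/
open MeasureTheory Filter
open scoped BigOperators ENNReal NNReal ComplexConjugate Classical

noncomputable section

/-- A solid involutive Banach algebra of complex-valued sequences on an additive group `Λ`,
with multiplication given by convolution.  The field `Mem` singles out the sequences belonging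
to the algebra and `N` is the norm (whose value is only relevant on members). -/
structure SolidConvStarAlgebra (Λ : Type) [AddCommGroup Λ] : Type where
  Mem : (Λ → ℂ) → Prop
  N : (Λ → ℂ) → ℝ
  zero_mem : Mem 0
  add_mem : ∀ {a b : Λ → ℂ}, Mem a → Mem b → Mem (a + b)
  smul_mem : ∀ (c : ℂ) {a : Λ → ℂ}, Mem a → Mem (c • a)
  N_nonneg : ∀ a : Λ → ℂ, 0 ≤ N a
  N_zero : N 0 = 0
  N_eq_zero : ∀ {a : Λ → ℂ}, Mem a → N a = 0 → a = 0
  N_add_le : ∀ {a b : Λ → ℂ}, Mem a → Mem b → N (a + b) ≤ N a + N b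
  N_smul : ∀ (c : ℂ) (a : Λ → ℂ), N (c • a) = ‖c‖ * N a
  /-- Completeness: every Cauchy sequence of members converges in norm to a member. -/
  complete : ∀ f : ℕ → (Λ → ℂ), (∀ n, Mem (f n)) →
    (∀ ε : ℝ, 0 < ε → ∃ n₀ : ℕ, ∀ m n : ℕ, n₀ ≤ m → n₀ ≤ n → N (f m - f n) < ε) →
    ∃ a : Λ → ℂ, Mem a ∧ Tendsto (fun n => N (f n - a)) atTop (nhds 0)
  /-- The convolution of two members is a well-defined sequence. -/
  conv_summable : ∀ {a b : Λ → ℂ}, Mem a → Mem b →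
    ∀ lam : Λ, Summable (fun mu => a mu * b (lam - mu))
  conv_mem : ∀ {a b : Λ → ℂ}, Mem a → Mem b →
    Mem (fun lam => ∑' mu, a mu * b (lam - mu))
  /-- Submultiplicativity of the norm with respect to convolution. -/
  N_conv_le : ∀ {a b : Λ → ℂ}, Mem a → Mem b →
    N (fun lam => ∑' mu, a mu * b (lam - mu)) ≤ N a * N b
  /-- Solidity: a sequence pointwise dominated by a member is a member, with smaller norm. -/
  solid : ∀ {a b : Λ → ℂ}, Mem b → (∀ lam, ‖a lam‖ ≤ ‖b lam‖) → Mem a ∧ N a ≤ N b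
  /-- Closure under the involution `a*(λ) = conj (a (-λ))`. -/
  star_mem : ∀ {a : Λ → ℂ}, Mem a → Mem (fun lam => (starRingEnd ℂ) (a (-lam)))
  N_star_le : ∀ {a : Λ → ℂ}, Mem a → N (fun lam => (starRingEnd ℂ) (a (-lam))) ≤ N a
  /-- The standard unit sequences `δ_λ` belong to the algebra. -/
  delta_mem : ∀ lam : Λ, Mem (fun mu => if mu = lam then (1:ℂ) else 0)

/-- The additive map `k ↦ B k` from `ℤ^d` to `ℝ^d`. -/
def latticeHom {d : ℕ} (B : Matrix (Fin d) (Fin d) ℝ) : ((Fin d) → ℤ) →+ ((Fin d) → ℝ) :=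
  AddMonoidHom.mk' (fun k => B.mulVec (fun i => (k i : ℝ))) (by
    intro a b
    show B.mulVec (fun i => (((a + b) i : ℤ) : ℝ)) =
        B.mulVec (fun i => ((a i : ℤ) : ℝ)) + B.mulVec (fun i => ((b i : ℤ) : ℝ))
    have h : (fun i => (((a + b) i : ℤ) : ℝ)) =
        ((fun i => ((a i : ℤ) : ℝ)) + fun i => ((b i : ℤ) : ℝ)) := by
      funext i; simp
    rw [h, Matrix.mulVec_add])

/-- The lattice `Λ = Bℤ^d ⊂ ℝ^d`. -/
def lattice {d : ℕ} (B : Matrix (Fin d) (Fin d) ℝ) : AddSubgroup ((Fin d) → ℝ) :=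
  (latticeHom B).range


namespace Aux0
variable {Λ : Type} [AddCommGroup Λ] (A : SolidConvStarAlgebra Λ)

def dd (lam : Λ) : Λ → ℂ := fun mu => if mu = lam then 1 else 0

lemma conv_dd (lam nu : Λ) :
    (fun x => ∑' mu, dd lam mu * dd nu (x - mu)) = dd (lam + nu) := by
  funext x
  have h : (fun mu => dd lam mu * dd nu (x - mu)) =
      fun mu => if mu = lam then dd nu (x - lam) else 0 := by
    funext mu
    by_cases h1 : mu = lam
    · subst h1; simp [dd]
    · simp [dd, h1]
  rw [h, tsum_ite_eq]
  simp [dd, sub_eq_iff_eq_add']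

lemma dd_star (lam : Λ) :
    (fun mu => (starRingEnd ℂ) (dd lam (-mu))) = dd (-lam) := by
  funext mu
  simp only [dd, neg_eq_iff_eq_neg]
  split_ifs <;> simp

lemma one_le_N_dd (lam : Λ) : 1 ≤ A.N (dd lam) := by
  have hdd : ∀ nu : Λ, A.Mem (dd nu) := fun nu => A.delta_mem nu
  have h00 : A.N (dd (0:Λ)) ≤ A.N (dd (0:Λ)) * A.N (dd (0:Λ)) := by
    have := A.N_conv_le (hdd 0) (hdd 0)
    rwa [conv_dd, add_zero] at this
  have hne : dd (0:Λ) ≠ 0 := by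
    intro h
    have := congrFun h 0
    simp [dd] at this
  have hpos : 0 < A.N (dd (0:Λ)) := by
    rcases (A.N_nonneg (dd 0)).lt_or_eq with h | h
    · exact h
    · exact absurd (A.N_eq_zero (hdd 0) h.symm) hne
  have h1 : 1 ≤ A.N (dd (0:Λ)) := (le_mul_iff_one_le_left hpos).mp h00
  have h2 : A.N (dd (0:Λ)) ≤ A.N (dd lam) * A.N (dd (-lam)) := by
    have := A.N_conv_le (hdd lam) (hdd (-lam))
    rwa [conv_dd, add_neg_cancel] at this
  have h3 : A.N (dd (-lam)) ≤ A.N (dd lam) := by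
    have := A.N_star_le (hdd lam)
    rwa [dd_star] at this
  nlinarith [A.N_nonneg (dd lam), A.N_nonneg (dd (-lam))]

lemma eval_le {c : Λ → ℂ} (hc : A.Mem c) (lam : Λ) : ‖c lam‖ ≤ A.N c := by
  have hb : ∀ mu, ‖(c lam • dd lam) mu‖ ≤ ‖c mu‖ := by
    intro mu
    simp only [Pi.smul_apply, dd, smul_eq_mul]
    split_ifs with h
    · subst h; simp
    · simp [norm_nonneg]
  have hs := A.solid hc hb
  have := A.N_smul (c lam) (dd lam)
  have h1 : ‖c lam‖ * 1 ≤ ‖c lam‖ * A.N (dd lam) :=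
    mul_le_mul_of_nonneg_left (one_le_N_dd A lam) (norm_nonneg _)
  calc ‖c lam‖ = ‖c lam‖ * 1 := (mul_one _).symm
    _ ≤ ‖c lam‖ * A.N (dd lam) := h1
    _ = A.N (c lam • dd lam) := (this).symm
    _ ≤ A.N c := hs.2


lemma final_step {S Na C : ℝ} {d : ℕ} (hS : 0 ≤ S) (hNa : 0 ≤ Na) (hC : 0 ≤ C)
    (h : ∀ m : ℕ, 1 ≤ m → S ^ m ≤ C * (m : ℝ) ^ d * Na ^ m) : S ≤ Na := by
  by_contra hlt
  push_neg at hlt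
  have hSpos : 0 < S := lt_of_le_of_lt hNa hlt
  set r : ℝ := Na / S with hr
  have hrlt : r < 1 := (div_lt_one hSpos).mpr hlt
  have hr0 : 0 ≤ r := div_nonneg hNa hSpos.le
  have hNar : Na = r * S := by rw [hr, div_mul_cancel₀ _ hSpos.ne']
  have key : ∀ m : ℕ, 1 ≤ m → 1 ≤ C * ((m : ℝ) ^ d * r ^ m) := by
    intro m hm
    have h1 : S ^ m ≤ (C * ((m:ℝ) ^ d * r ^ m)) * S ^ m := by
      calc S ^ m ≤ C * (m : ℝ) ^ d * Na ^ m := h m hm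
        _ = (C * ((m:ℝ) ^ d * r ^ m)) * S ^ m := by rw [hNar, mul_pow]; ring
    exact (le_mul_iff_one_le_left (pow_pos hSpos m)).mp h1
  have htend : Tendsto (fun m : ℕ => C * ((m : ℝ) ^ d * r ^ m)) atTop (nhds 0) := by
    have : Tendsto (fun m : ℕ => (m : ℝ) ^ d * r ^ m) atTop (nhds 0) :=
      (summable_pow_mul_geometric_of_norm_lt_one (R := ℝ) d (by rwa [Real.norm_eq_abs, abs_of_nonneg hr0])).tendsto_atTop_zero
    simpa using this.const_mul C
  have : (1:ℝ) ≤ 0 := ge_of_tendsto htend (eventually_atTop.mpr ⟨1, fun m hm => key m hm⟩)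
  linarith

open scoped Pointwise in
lemma sum_le_N {d : ℕ} (e : (Fin d → ℤ) ≃+ Λ) {a : Λ → ℂ} (ha : A.Mem a)
    (F : Finset Λ) : ∑ lam ∈ F, ‖a lam‖ ≤ A.N a := by
  classical
  set u0 : Λ → ℝ := fun lam => if lam ∈ F then ‖a lam‖ else 0 with hu0def
  set Fn : ℕ → Finset Λ := fun n => Nat.rec F (fun _ s => s + F) n with hFndef
  have hFn0 : Fn 0 = F := rfl
  have hFns : ∀ n, Fn (n+1) = Fn n + F := fun n => rfl
  set u : ℕ → Λ → ℝ :=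
    fun n => Nat.rec u0 (fun n un lam => ∑ mu ∈ Fn n, un mu * u0 (lam - mu)) n with hudef
  have hu00 : u 0 = u0 := rfl
  have hus : ∀ n lam, u (n+1) lam = ∑ mu ∈ Fn n, u n mu * u0 (lam - mu) := fun n lam => rfl
  set g : ℕ → Λ → ℂ := fun n lam => ((u n lam : ℝ) : ℂ) with hgdef
  set S : ℝ := ∑ lam ∈ F, u0 lam with hSdef
  have Na_nonneg := A.N_nonneg a
  -- nonnegativity
  have u0_nonneg : ∀ lam, 0 ≤ u0 lam := by
    intro lam; simp only [hu0def]
    split_ifs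
    · exact norm_nonneg _
    · exact le_refl 0
  have u_nonneg : ∀ n lam, 0 ≤ u n lam := by
    intro n; induction n with
    | zero => exact u0_nonneg
    | succ n ih =>
      intro lam; rw [hus]
      exact Finset.sum_nonneg fun mu _ => mul_nonneg (ih mu) (u0_nonneg _)
  have u0_supp : ∀ lam, lam ∉ F → u0 lam = 0 := fun lam h => if_neg h
  -- support
  have u_supp : ∀ n, ∀ lam, lam ∉ Fn n → u n lam = 0 := by
    intro n; induction n with
    | zero => exact u0_supp
    | succ n ih =>
      intro lam hlam
      rw [hus]
      refine Finset.sum_eq_zero fun mu hmu => ?_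
      have hmem : lam - mu ∉ F := by
        intro hmem
        have h2 := Finset.add_mem_add hmu hmem
        have h3 : mu + (lam - mu) = lam := by abel
        rw [h3] at h2
        exact hlam (by rw [hFns]; exact h2)
      rw [u0_supp _ hmem, mul_zero]
  -- convolution identity
  have conv_g : ∀ n, (fun lam => ∑' mu, g n mu * g 0 (lam - mu)) = g (n+1) := by
    intro n; funext lam
    have hz : ∀ mu ∉ Fn n, g n mu * g 0 (lam - mu) = 0 := by
      intro mu hmu
      simp [hgdef, u_supp n mu hmu]
    rw [tsum_eq_sum hz]
    simp only [hgdef, hu00, hus]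
    push_cast
    rfl
  -- membership and norm bounds
  have hg0 : A.Mem (g 0) ∧ A.N (g 0) ≤ A.N a := by
    have hb : ∀ lam, ‖g 0 lam‖ ≤ ‖a lam‖ := by
      intro lam
      simp only [hgdef, hu00, Complex.norm_real, Real.norm_eq_abs,
        abs_of_nonneg (u0_nonneg lam)]
      simp only [hu0def]
      split_ifs
      · exact le_refl _
      · exact norm_nonneg _
    exact A.solid ha hb
  have mem_g : ∀ n, A.Mem (g n) ∧ A.N (g n) ≤ A.N a ^ (n+1) := by
    intro n; induction n with
    | zero => exact ⟨hg0.1, by simpa using hg0.2⟩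
    | succ n ih =>
      obtain ⟨hm, hn⟩ := ih
      have hmem := A.conv_mem hm hg0.1
      have hNle := A.N_conv_le hm hg0.1
      rw [conv_g n] at hmem hNle
      refine ⟨hmem, ?_⟩
      calc A.N (g (n+1)) ≤ A.N (g n) * A.N (g 0) := hNle
        _ ≤ A.N a ^ (n+1) * A.N a :=
            mul_le_mul hn hg0.2 (A.N_nonneg _) (pow_nonneg Na_nonneg _)
        _ = A.N a ^ (n+2) := (pow_succ _ _).symm
  -- total mass identity
  have inner : ∀ n, ∀ mu ∈ Fn n, ∑ lam ∈ Fn (n+1), u0 (lam - mu) = S := by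
    intro n mu hmu
    have hinj : Function.Injective (fun lam : Λ => lam - mu) :=
      fun x y h => by simpa using sub_left_injective h
    have h1 : ∑ lam ∈ Fn (n+1), u0 (lam - mu)
        = ∑ nu ∈ (Fn (n+1)).image (fun lam => lam - mu), u0 nu :=
      (Finset.sum_image (fun x _ y _ h => hinj h)).symm
    rw [h1, hSdef]
    refine (Finset.sum_subset ?_ ?_).symm
    · intro f hf
      refine Finset.mem_image.mpr ⟨mu + f, ?_, by abel⟩
      rw [hFns]
      exact Finset.add_mem_add hmu hf
    · intro x _ hx
      exact u0_supp x hx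
  have sum_u : ∀ n, ∑ lam ∈ Fn n, u n lam = S ^ (n+1) := by
    intro n; induction n with
    | zero => rw [hFn0, hu00, pow_one]
    | succ n ih =>
      have hcomm : ∑ lam ∈ Fn (n+1), u (n+1) lam
          = ∑ mu ∈ Fn n, u n mu * (∑ lam ∈ Fn (n+1), u0 (lam - mu)) := by
        simp only [hus]
        rw [Finset.sum_comm]
        simp [Finset.mul_sum]
      rw [hcomm]
      calc ∑ mu ∈ Fn n, u n mu * (∑ lam ∈ Fn (n+1), u0 (lam - mu))
          = ∑ mu ∈ Fn n, u n mu * S :=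
            Finset.sum_congr rfl fun mu hmu => by rw [inner n mu hmu]
        _ = S ^ (n+1) * S := by rw [← Finset.sum_mul, ih]
        _ = S ^ (n+2) := (pow_succ _ _).symm
  -- pointwise bound and pigeonhole
  have u_le : ∀ n lam, u n lam ≤ A.N a ^ (n+1) := by
    intro n lam
    have h1 := eval_le A (mem_g n).1 lam
    have habs : u n lam ≤ ‖g n lam‖ := by
      simp only [hgdef, Complex.norm_real, Real.norm_eq_abs]
      exact le_abs_self _
    exact habs.trans (h1.trans (mem_g n).2)
  have key : ∀ n : ℕ, S ^ (n+1) ≤ ((Fn n).card : ℝ) * A.N a ^ (n+1) := by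
    intro n
    rw [← sum_u n]
    have := Finset.sum_le_card_nsmul (Fn n) (u n) (A.N a ^ (n+1))
      (fun lam _ => u_le n lam)
    simpa [nsmul_eq_mul] using this
  -- cardinality bound via the lattice coordinates
  set G : Finset (Fin d → ℤ) := F.image (fun lam => e.symm lam) with hGdef
  set L : ℕ := G.sup (fun v : Fin d → ℤ => Finset.univ.sup fun i => (v i).natAbs) with hLdef
  have coordF : ∀ lam ∈ F, ∀ i, |(e.symm lam) i| ≤ (L : ℤ) := by
    intro lam hlam i
    have hmemG : (e.symm lam : Fin d → ℤ) ∈ G := Finset.mem_image_of_mem _ hlam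
    have h2 : (Finset.univ.sup fun j => ((e.symm lam) j).natAbs) ≤ L :=
      Finset.le_sup (f := fun v : Fin d → ℤ => Finset.univ.sup fun i => (v i).natAbs) hmemG
    have h1 : ((e.symm lam) i).natAbs ≤ L :=
      le_trans (Finset.le_sup (f := fun j : Fin d => ((e.symm lam) j).natAbs)
        (Finset.mem_univ i)) h2
    rw [Int.abs_eq_natAbs]
    exact_mod_cast h1
  have coordFn : ∀ n, ∀ lam ∈ Fn n, ∀ i, |(e.symm lam) i| ≤ ((n+1 : ℕ) : ℤ) * L := by
    intro n; induction n with
    | zero =>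
      intro lam hlam i
      simpa using coordF lam hlam i
    | succ n ih =>
      intro lam hlam i
      rw [hFns] at hlam
      obtain ⟨y, hy, z, hz, rfl⟩ := Finset.mem_add.mp hlam
      have hmap : e.symm (y + z) i = e.symm y i + e.symm z i := by
        rw [map_add]; rfl
      calc |e.symm (y+z) i| = |e.symm y i + e.symm z i| := by rw [hmap]
        _ ≤ |e.symm y i| + |e.symm z i| := abs_add_le _ _
        _ ≤ ((n+1 : ℕ) : ℤ) * L + L := add_le_add (ih y hy i) (coordF z hz i)
        _ = ((n+1+1 : ℕ) : ℤ) * L := by push_cast; ring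
  have cardFn : ∀ n, ((Fn n).card : ℝ) ≤ (((2*(n+1)*L+1 : ℕ) : ℝ)) ^ d := by
    intro n
    have himg : ((Fn n).image (fun lam => e.symm lam)) ⊆
        Fintype.piFinset (fun _ : Fin d => Finset.Icc (-(((n+1)*L : ℕ) : ℤ)) (((n+1)*L : ℕ) : ℤ)) := by
      intro v hv
      rw [Finset.mem_image] at hv
      obtain ⟨lam, hlam, rfl⟩ := hv
      rw [Fintype.mem_piFinset]
      intro i
      rw [Finset.mem_Icc]
      have h1 := coordFn n lam hlam i
      have h2 : |e.symm lam i| ≤ (((n+1)*L : ℕ) : ℤ) := by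
        refine le_trans h1 (le_of_eq ?_)
        push_cast; ring
      exact abs_le.mp h2
    have h1 : (Fn n).card = ((Fn n).image (fun lam => e.symm lam)).card :=
      (Finset.card_image_of_injective _ e.symm.injective).symm
    have hIcc : (Finset.Icc (-(((n+1)*L : ℕ) : ℤ)) (((n+1)*L : ℕ) : ℤ)).card
        = 2*(n+1)*L+1 := by
      rw [Int.card_Icc]
      have : ((((n+1)*L : ℕ) : ℤ) + 1 - (-(((n+1)*L : ℕ) : ℤ))) = ((2*(n+1)*L+1 : ℕ) : ℤ) := by
        push_cast; ring
      rw [this, Int.toNat_natCast]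
    have h2 : ((Fn n).image (fun lam => e.symm lam)).card ≤ (2*(n+1)*L+1)^d := by
      refine le_trans (Finset.card_le_card himg) ?_
      rw [Fintype.card_piFinset]
      simp only [hIcc]
      rw [Finset.prod_const, Finset.card_univ, Fintype.card_fin]
    rw [h1]
    exact_mod_cast h2
  -- conclude
  have hSval : ∑ lam ∈ F, ‖a lam‖ = S := by
    rw [hSdef]
    exact Finset.sum_congr rfl fun lam hlam => by rw [hu0def]; exact (if_pos hlam).symm
  rw [hSval]
  have hS_nonneg : 0 ≤ S := Finset.sum_nonneg fun lam _ => u0_nonneg lam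
  have hCge : (0:ℝ) ≤ (2*(L:ℝ)+1)^d := by positivity
  refine final_step (d := d) hS_nonneg Na_nonneg hCge ?_
  intro m hm
  obtain ⟨n, rfl⟩ := Nat.exists_eq_succ_of_ne_zero (Nat.one_le_iff_ne_zero.mp hm)
  calc S ^ (n+1) ≤ ((Fn n).card : ℝ) * A.N a ^ (n+1) := key n
    _ ≤ (((2*(n+1)*L+1 : ℕ) : ℝ)) ^ d * A.N a ^ (n+1) :=
        mul_le_mul_of_nonneg_right (cardFn n) (pow_nonneg Na_nonneg _)
    _ ≤ (2*(L:ℝ)+1)^d * ((n+1 : ℕ) : ℝ)^d * A.N a ^ (n+1) := by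
        refine mul_le_mul_of_nonneg_right ?_ (pow_nonneg Na_nonneg _)
        rw [← mul_pow]
        refine pow_le_pow_left₀ (by positivity) ?_ d
        push_cast
        nlinarith [Nat.cast_nonneg (α := ℝ) L, Nat.cast_nonneg (α := ℝ) n]


/-- The coordinate equivalence between `ℤ^d` and the lattice. -/
def latticeEquiv {d : ℕ} (B : Matrix (Fin d) (Fin d) ℝ) (hB : IsUnit B.det) :
    ((Fin d) → ℤ) ≃+ ↥(lattice B) :=
  AddEquiv.ofBijective (latticeHom B).rangeRestrict
    ⟨fun x y hxy => by
      have hBinj : Function.Injective B.mulVec :=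
        Matrix.mulVec_injective_iff_isUnit.mpr ((Matrix.isUnit_iff_isUnit_det B).mpr hB)
      have h : latticeHom B x = latticeHom B y := congrArg Subtype.val hxy
      have h2 : (fun i => ((x i : ℤ) : ℝ)) = fun i => ((y i : ℤ) : ℝ) := hBinj h
      funext i
      exact_mod_cast congrFun h2 i,
     (latticeHom B).rangeRestrict_surjective⟩

end Aux0

/-- A solid involutive Banach algebra under convolution on a lattice
`Λ = Bℤ^d ⊂ ℝ^d` is continuously embedded in `ℓ¹(Λ)`; more precisely
`‖a‖_{ℓ¹(Λ)} ≤ ‖a‖_A` for every `a ∈ A`. -/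
theorem statement0 {d : ℕ} (B : Matrix (Fin d) (Fin d) ℝ) (hB : IsUnit B.det)
    (A : SolidConvStarAlgebra ↥(lattice B)) :
    ∀ a : ↥(lattice B) → ℂ, A.Mem a →
      Summable (fun lam => ‖a lam‖) ∧ ∑' lam : ↥(lattice B), ‖a lam‖ ≤ A.N a := by
  intro a ha
  have hbound : ∀ F : Finset ↥(lattice B), ∑ lam ∈ F, ‖a lam‖ ≤ A.N a :=
    fun F => Aux0.sum_le_N A (Aux0.latticeEquiv B hB) ha F
  have hsum : Summable (fun lam : ↥(lattice B) => ‖a lam‖) :=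
    summable_of_sum_le (fun lam => norm_nonneg _) hbound
  exact ⟨hsum, Summable.tsum_le_of_sum_le hsum hbound⟩

end
end

section
/- Let A be a solid Banach algebra under convolution of sequences on a lattice Λ ⊂ ℝ^d. Then the matrix class C_A is a Banach algebra under matrix multiplication: if A, B ∈ C_A then the product matrix AB satisfies the pointwise bound d_{AB}(μ) ≤ (d_A * d_B)(μ) for all μ ∈ Λ, hence AB ∈ C_A and ‖AB‖_{C_A} ≤ ‖A‖_{C_A}‖B‖_{C_A}. -/
open MeasureTheory Filter
open scoped BigOperators ENNReal NNReal ComplexConjugate Classical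

noncomputable section

/-- A solid Banach algebra of complex-valued sequences on an additive group `Λ`,
with multiplication given by convolution.  The field `Mem` singles out the sequences
belonging to the algebra and `N` is the norm (whose value is only relevant on members). -/
structure SolidConvAlgebra (Λ : Type) [AddCommGroup Λ] : Type where
  Mem : (Λ → ℂ) → Prop
  N : (Λ → ℂ) → ℝ
  zero_mem : Mem 0
  add_mem : ∀ {a b : Λ → ℂ}, Mem a → Mem b → Mem (a + b)
  smul_mem : ∀ (c : ℂ) {a : Λ → ℂ}, Mem a → Mem (c • a)
  N_nonneg : ∀ a : Λ → ℂ, 0 ≤ N a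
  N_zero : N 0 = 0
  N_eq_zero : ∀ {a : Λ → ℂ}, Mem a → N a = 0 → a = 0
  N_add_le : ∀ {a b : Λ → ℂ}, Mem a → Mem b → N (a + b) ≤ N a + N b
  N_smul : ∀ (c : ℂ) (a : Λ → ℂ), N (c • a) = ‖c‖ * N a
  /-- Completeness: every Cauchy sequence of members converges in norm to a member. -/
  complete : ∀ f : ℕ → (Λ → ℂ), (∀ n, Mem (f n)) →
    (∀ ε : ℝ, 0 < ε → ∃ n₀ : ℕ, ∀ m n : ℕ, n₀ ≤ m → n₀ ≤ n → N (f m - f n) < ε) →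
    ∃ a : Λ → ℂ, Mem a ∧ Tendsto (fun n => N (f n - a)) atTop (nhds 0)
  /-- The convolution of two members is a well-defined sequence. -/
  conv_summable : ∀ {a b : Λ → ℂ}, Mem a → Mem b →
    ∀ lam : Λ, Summable (fun mu => a mu * b (lam - mu))
  conv_mem : ∀ {a b : Λ → ℂ}, Mem a → Mem b →
    Mem (fun lam => ∑' mu, a mu * b (lam - mu))
  /-- Submultiplicativity of the norm with respect to convolution. -/
  N_conv_le : ∀ {a b : Λ → ℂ}, Mem a → Mem b →
    N (fun lam => ∑' mu, a mu * b (lam - mu)) ≤ N a * N b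
  /-- Solidity: a sequence pointwise dominated by a member is a member, with smaller norm. -/
  solid : ∀ {a b : Λ → ℂ}, Mem b → (∀ lam, ‖a lam‖ ≤ ‖b lam‖) → Mem a ∧ N a ≤ N b

/-- The `μ`-th diagonal supremum `d_M(μ) = sup_λ |M_{λ, λ-μ}|` of a matrix `M`,
computed in `ℝ≥0∞`. -/
def diagSup {Λ : Type} [AddCommGroup Λ] (M : Λ → Λ → ℂ) (mu : Λ) : ℝ≥0∞ :=
  ⨆ lam : Λ, (‖M lam (lam - mu)‖₊ : ℝ≥0∞)

/-- Membership in the matrix algebra `C_A`: the sequence of diagonal suprema of `M` is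
dominated by a member of `A` (equivalently, by solidity, it belongs to `A`). -/
def MemCA {Λ : Type} [AddCommGroup Λ] (A : SolidConvAlgebra Λ) (M : Λ → Λ → ℂ) : Prop :=
  ∃ a : Λ → ℝ, A.Mem (fun lam => (a lam : ℂ)) ∧
    ∀ mu : Λ, diagSup M mu ≤ ENNReal.ofReal (a mu)

/-- The norm `‖M‖_{C_A} = ‖d_M‖_A` of a matrix in `C_A`, expressed as the infimum of the
`A`-norms of dominating sequences. -/
def CAnorm {Λ : Type} [AddCommGroup Λ] (A : SolidConvAlgebra Λ) (M : Λ → Λ → ℂ) : ℝ :=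
  sInf {r : ℝ | ∃ a : Λ → ℝ, A.Mem (fun lam => (a lam : ℂ)) ∧
    (∀ mu : Λ, diagSup M mu ≤ ENNReal.ofReal (a mu)) ∧ r = A.N (fun lam => (a lam : ℂ))}

/-- Multiplication of (infinite) matrices over `Λ`. -/
def matMul {Λ : Type} [AddCommGroup Λ] (M M' : Λ → Λ → ℂ) : Λ → Λ → ℂ :=
  fun lam mu => ∑' nu : Λ, M lam nu * M' nu mu

/-- The `ℝ≥0∞`-valued norm of a `tsum` is at most the `tsum` of the norms
(unconditionally, since a non-summable `tsum` is zero and a non-summable `ℝ≥0∞`-sum is `⊤`). -/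
lemma nnnorm_tsum_le_ennreal {Λ : Type} (f : Λ → ℂ) :
    (‖∑' ν, f ν‖₊ : ℝ≥0∞) ≤ ∑' ν, (‖f ν‖₊ : ℝ≥0∞) := by
  by_cases htop : (∑' ν, (‖f ν‖₊ : ℝ≥0∞)) = ⊤
  · exact htop ▸ le_top
  · have hs : Summable fun ν => ‖f ν‖₊ := ENNReal.tsum_coe_ne_top_iff_summable.1 htop
    rw [← ENNReal.coe_tsum hs]
    exact_mod_cast nnnorm_tsum_le hs

/-- Pointwise bound `d_{MM'} ≤ d_M * d_{M'}` for the diagonal suprema. -/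
lemma diag_mul_bound {Λ : Type} [AddCommGroup Λ] (M M' : Λ → Λ → ℂ) (mu : Λ) :
    diagSup (matMul M M') mu ≤ ∑' nu, diagSup M nu * diagSup M' (mu - nu) := by
  refine iSup_le fun lam => ?_
  calc (‖matMul M M' lam (lam - mu)‖₊ : ℝ≥0∞)
      ≤ ∑' nu, (‖M lam nu * M' nu (lam - mu)‖₊ : ℝ≥0∞) := nnnorm_tsum_le_ennreal _
    _ = ∑' kappa, (‖M lam (lam - kappa) * M' (lam - kappa) (lam - mu)‖₊ : ℝ≥0∞) :=
        ((Equiv.subLeft lam).tsum_eq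
          (fun nu => (‖M lam nu * M' nu (lam - mu)‖₊ : ℝ≥0∞))).symm
    _ ≤ ∑' nu, diagSup M nu * diagSup M' (mu - nu) := by
        refine ENNReal.tsum_le_tsum fun kappa => ?_
        rw [nnnorm_mul, ENNReal.coe_mul]
        refine mul_le_mul' ?_ ?_
        · exact le_iSup (fun l => (‖M l (l - kappa)‖₊ : ℝ≥0∞)) lam
        · have h : lam - mu = (lam - kappa) - (mu - kappa) := by abel
          rw [h]
          exact le_iSup (fun l => (‖M' l (l - (mu - kappa))‖₊ : ℝ≥0∞)) (lam - kappa)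

/-- Any dominating sequence can be replaced by a nonnegative one with smaller `A`-norm. -/
lemma dominator_nonneg {Λ : Type} [AddCommGroup Λ] (A : SolidConvAlgebra Λ) {M : Λ → Λ → ℂ}
    {a : Λ → ℝ} (haM : A.Mem (fun lam => (a lam : ℂ)))
    (hda : ∀ mu, diagSup M mu ≤ ENNReal.ofReal (a mu)) :
    ∃ a' : Λ → ℝ, (∀ lam, 0 ≤ a' lam) ∧ A.Mem (fun lam => (a' lam : ℂ)) ∧
      (∀ mu, diagSup M mu ≤ ENNReal.ofReal (a' mu)) ∧
      A.N (fun lam => (a' lam : ℂ)) ≤ A.N (fun lam => (a lam : ℂ)) := by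
  refine ⟨fun lam => |a lam|, fun lam => abs_nonneg _, ?_, ?_, ?_⟩
  · exact (A.solid haM (fun lam => by simp)).1
  · intro mu
    exact (hda mu).trans (ENNReal.ofReal_le_ofReal (le_abs_self _))
  · exact (A.solid haM (fun lam => by simp)).2

/-- The convolution of two nonnegative dominating sequences dominates the product matrix. -/
lemma prod_dom {Λ : Type} [AddCommGroup Λ] (A : SolidConvAlgebra Λ) (M M' : Λ → Λ → ℂ)
    (a b : Λ → ℝ) (ha0 : ∀ l, 0 ≤ a l) (hb0 : ∀ l, 0 ≤ b l)
    (haM : A.Mem (fun l => (a l : ℂ))) (hbM : A.Mem (fun l => (b l : ℂ)))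
    (hda : ∀ mu, diagSup M mu ≤ ENNReal.ofReal (a mu))
    (hdb : ∀ mu, diagSup M' mu ≤ ENNReal.ofReal (b mu)) :
    ∃ c : Λ → ℝ, A.Mem (fun l => (c l : ℂ)) ∧
      (∀ mu, diagSup (matMul M M') mu ≤ ENNReal.ofReal (c mu)) ∧
      A.N (fun l => (c l : ℂ)) ≤ A.N (fun l => (a l : ℂ)) * A.N (fun l => (b l : ℂ)) := by
  have hsumC := A.conv_summable haM hbM
  have hsumR : ∀ lam : Λ, Summable fun nu => a nu * b (lam - nu) := by
    intro lam
    have h := hsumC lam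
    have he : (fun nu => (a nu : ℂ) * (b (lam - nu) : ℂ)) =
        fun nu => ((a nu * b (lam - nu) : ℝ) : ℂ) := by
      funext nu; push_cast; ring
    rw [he] at h
    exact Complex.summable_ofReal.1 h
  have hcast : (fun l => ((∑' nu, a nu * b (l - nu) : ℝ) : ℂ)) =
      fun l => ∑' nu, (a nu : ℂ) * (b (l - nu) : ℂ) := by
    funext l
    rw [Complex.ofReal_tsum]
    congr 1; funext nu; push_cast; ring
  refine ⟨fun mu => ∑' nu, a nu * b (mu - nu), ?_, ?_, ?_⟩
  · rw [hcast]; exact A.conv_mem haM hbM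
  · intro mu
    calc diagSup (matMul M M') mu
        ≤ ∑' nu, diagSup M nu * diagSup M' (mu - nu) := diag_mul_bound M M' mu
      _ ≤ ∑' nu, ENNReal.ofReal (a nu * b (mu - nu)) := by
          refine ENNReal.tsum_le_tsum fun nu => ?_
          rw [ENNReal.ofReal_mul (ha0 nu)]
          exact mul_le_mul' (hda nu) (hdb (mu - nu))
      _ = ENNReal.ofReal (∑' nu, a nu * b (mu - nu)) :=
          (ENNReal.ofReal_tsum_of_nonneg
            (fun nu => mul_nonneg (ha0 nu) (hb0 (mu - nu))) (hsumR mu)).symm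
  · rw [hcast]; exact A.N_conv_le haM hbM

/-- `CAnorm` is at most the norm of any dominating member. -/
lemma CAnorm_le_of_dom {Λ : Type} [AddCommGroup Λ] (A : SolidConvAlgebra Λ) (M₀ : Λ → Λ → ℂ)
    {c : Λ → ℝ} (hc : A.Mem (fun l => (c l : ℂ)))
    (hdc : ∀ mu, diagSup M₀ mu ≤ ENNReal.ofReal (c mu)) :
    CAnorm A M₀ ≤ A.N (fun l => (c l : ℂ)) := by
  apply csInf_le
  · exact ⟨0, fun r hr => by obtain ⟨a, -, -, rfl⟩ := hr; exact A.N_nonneg _⟩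
  · exact ⟨c, hc, hdc, rfl⟩

/-- For any `ε > 0` there is a nonnegative dominating member whose norm is within `ε`
of `CAnorm`. -/
lemma exists_dom_lt {Λ : Type} [AddCommGroup Λ] (A : SolidConvAlgebra Λ) {M₀ : Λ → Λ → ℂ}
    (h : MemCA A M₀) {ε : ℝ} (hε : 0 < ε) :
    ∃ a : Λ → ℝ, (∀ l, 0 ≤ a l) ∧ A.Mem (fun l => (a l : ℂ)) ∧
      (∀ mu, diagSup M₀ mu ≤ ENNReal.ofReal (a mu)) ∧
      A.N (fun l => (a l : ℂ)) < CAnorm A M₀ + ε := by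
  obtain ⟨a0, ha0, hda0⟩ := h
  have hne : {r : ℝ | ∃ a : Λ → ℝ, A.Mem (fun lam => (a lam : ℂ)) ∧
      (∀ mu : Λ, diagSup M₀ mu ≤ ENNReal.ofReal (a mu)) ∧
      r = A.N (fun lam => (a lam : ℂ))}.Nonempty := ⟨_, a0, ha0, hda0, rfl⟩
  obtain ⟨r, hr, hrlt⟩ := Real.lt_sInf_add_pos hne hε
  obtain ⟨a, ha, hda, rfl⟩ := hr
  obtain ⟨a', h0, hm, hd, hN⟩ := dominator_nonneg A ha hda
  exact ⟨a', h0, hm, hd, hN.trans_lt hrlt⟩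

/-- For a solid convolution Banach algebra `A` on a lattice `Λ ⊂ ℝ^d`,
the matrix class `C_A` is a Banach algebra under matrix multiplication: for `M, M' ∈ C_A`
the diagonal suprema of the product satisfy `d_{MM'} ≤ d_M * d_{M'}` pointwise, whence
`MM' ∈ C_A` and `‖MM'‖_{C_A} ≤ ‖M‖_{C_A} ‖M'‖_{C_A}`. -/
theorem statement5 {d : ℕ} (B : Matrix (Fin d) (Fin d) ℝ) (hB : IsUnit B.det)
    (A : SolidConvAlgebra ↥(lattice B))
    (M M' : ↥(lattice B) → ↥(lattice B) → ℂ)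
    (hM : MemCA A M) (hM' : MemCA A M') :
    (∀ mu : ↥(lattice B),
        diagSup (matMul M M') mu ≤ ∑' nu : ↥(lattice B), diagSup M nu * diagSup M' (mu - nu)) ∧
    MemCA A (matMul M M') ∧
    CAnorm A (matMul M M') ≤ CAnorm A M * CAnorm A M' := by
  refine ⟨fun mu => diag_mul_bound M M' mu, ?_, ?_⟩
  · obtain ⟨a, ha0, ha, hda, -⟩ := exists_dom_lt A hM one_pos
    obtain ⟨b, hb0, hb, hdb, -⟩ := exists_dom_lt A hM' one_pos
    obtain ⟨c, hc, hdc, -⟩ := prod_dom A M M' a b ha0 hb0 ha hb hda hdb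
    exact ⟨c, hc, hdc⟩
  · have key : ∀ ε : ℝ, 0 < ε →
        CAnorm A (matMul M M') ≤ (CAnorm A M + ε) * (CAnorm A M' + ε) := by
      intro ε hε
      obtain ⟨a, ha0, ha, hda, haN⟩ := exists_dom_lt A hM hε
      obtain ⟨b, hb0, hb, hdb, hbN⟩ := exists_dom_lt A hM' hε
      obtain ⟨c, hc, hdc, hNc⟩ := prod_dom A M M' a b ha0 hb0 ha hb hda hdb
      refine (CAnorm_le_of_dom A _ hc hdc).trans (hNc.trans ?_)
      exact mul_le_mul haN.le hbN.le (A.N_nonneg _) ((A.N_nonneg _).trans haN.le)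
    have htend : Tendsto (fun ε : ℝ => (CAnorm A M + ε) * (CAnorm A M' + ε))
        (nhdsWithin 0 (Set.Ioi 0)) (nhds (CAnorm A M * CAnorm A M')) := by
      have h : Tendsto (fun ε : ℝ => (CAnorm A M + ε) * (CAnorm A M' + ε)) (nhds 0)
          (nhds ((CAnorm A M + 0) * (CAnorm A M' + 0))) :=
        (tendsto_const_nhds.add tendsto_id).mul (tendsto_const_nhds.add tendsto_id)
      simpa using h.mono_left nhdsWithin_le_nhds
    exact ge_of_tendsto htend (eventually_nhdsWithin_of_forall fun ε hε => key ε hε)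

end
end

section
/- Let A be a solid Banach algebra under convolution of sequences on a lattice Λ ⊂ ℝ^d, and let Y be a solid Banach space of sequences on Λ on which A acts boundedly by convolution, i.e., ‖a * c‖_Y ≤ ‖a‖_A ‖c‖_Y for all a ∈ A, c ∈ Y. Then every matrix A ∈ C_A acts boundedly on Y with ‖Ac‖_Y ≤ ‖A‖_{C_A} ‖c‖_Y for all c ∈ Y. In particular (taking Y = ℓ²(Λ)), C_A is a Banach subalgebra of the bounded operators on ℓ²(Λ). -/
open MeasureTheory Filter
open scoped BigOperators ENNReal NNReal ComplexConjugate Classical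

noncomputable section

/-- A solid Banach space of complex-valued sequences on `Λ`. -/
structure SolidSeqSpace (Λ : Type) [AddCommGroup Λ] : Type where
  Mem : (Λ → ℂ) → Prop
  N : (Λ → ℂ) → ℝ
  zero_mem : Mem 0
  add_mem : ∀ {a b : Λ → ℂ}, Mem a → Mem b → Mem (a + b)
  smul_mem : ∀ (c : ℂ) {a : Λ → ℂ}, Mem a → Mem (c • a)
  N_nonneg : ∀ a : Λ → ℂ, 0 ≤ N a
  N_zero : N 0 = 0
  N_eq_zero : ∀ {a : Λ → ℂ}, Mem a → N a = 0 → a = 0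
  N_add_le : ∀ {a b : Λ → ℂ}, Mem a → Mem b → N (a + b) ≤ N a + N b
  N_smul : ∀ (c : ℂ) (a : Λ → ℂ), N (c • a) = ‖c‖ * N a
  complete : ∀ f : ℕ → (Λ → ℂ), (∀ n, Mem (f n)) →
    (∀ ε : ℝ, 0 < ε → ∃ n₀ : ℕ, ∀ m n : ℕ, n₀ ≤ m → n₀ ≤ n → N (f m - f n) < ε) →
    ∃ a : Λ → ℂ, Mem a ∧ Tendsto (fun n => N (f n - a)) atTop (nhds 0)
  solid : ∀ {a b : Λ → ℂ}, Mem b → (∀ lam, ‖a lam‖ ≤ ‖b lam‖) → Mem a ∧ N a ≤ N b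


/-- Cauchy–Schwarz for `tsum` in `ℝ≥0∞`. -/
lemma tsum_mul_sq_le_st6 {ι : Type*} (u v : ι → ℝ≥0∞) :
    (∑' i, u i * v i) ^ 2 ≤ (∑' i, u i ^ 2) * (∑' i, v i ^ 2) := by
  have h2 : ∀ x : ℝ≥0∞, x ^ (2 : ℝ) = x ^ 2 := fun x => by
    rw [show (2 : ℝ) = ((2 : ℕ) : ℝ) by norm_num, ENNReal.rpow_natCast]
  have hpq : Real.HolderConjugate 2 2 := Real.HolderConjugate.two_two
  have key : (∑' i, u i * v i) ≤
      (∑' i, u i ^ 2) ^ (1 / 2 : ℝ) * (∑' i, v i ^ 2) ^ (1 / 2 : ℝ) := by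
    rw [ENNReal.tsum_eq_iSup_sum]
    refine iSup_le fun s => (ENNReal.inner_le_Lp_mul_Lq s u v hpq).trans ?_
    gcongr
    · simp_rw [h2]; exact ENNReal.sum_le_tsum s
    · simp_rw [h2]; exact ENNReal.sum_le_tsum s
  calc (∑' i, u i * v i) ^ 2
      ≤ ((∑' i, u i ^ 2) ^ (1 / 2 : ℝ) * (∑' i, v i ^ 2) ^ (1 / 2 : ℝ)) ^ 2 := by
        exact pow_le_pow_left' key 2
    _ = (∑' i, u i ^ 2) * (∑' i, v i ^ 2) := by
        rw [mul_pow, ← h2, ← h2, ← ENNReal.rpow_mul, ← ENNReal.rpow_mul]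
        norm_num

/-- Young-type bound for the `ℓ²` norm of a convolution in `ℝ≥0∞`. -/
lemma conv_sq_bound_st6 {Λ : Type*} [AddCommGroup Λ] (f g : Λ → ℝ≥0∞) :
    ∑' lam, (∑' mu, f (lam - mu) * g mu) ^ 2 ≤
      (∑' nu, f nu) ^ 2 * ∑' mu, g mu ^ 2 := by
  set S := ∑' nu, f nu with hS
  have hshift : ∀ lam : Λ, ∑' mu, f (lam - mu) = S := by
    intro lam
    simpa using (Equiv.subLeft lam).tsum_eq f
  have hshift' : ∀ mu : Λ, ∑' lam, f (lam - mu) = S := by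
    intro mu
    have := (Equiv.addRight mu).tsum_eq (fun lam => f (lam - mu))
    simpa using this.symm
  have step1 : ∀ lam, (∑' mu, f (lam - mu) * g mu) ^ 2 ≤
      S * ∑' mu, f (lam - mu) * g mu ^ 2 := by
    intro lam
    have hsplit : ∀ mu, f (lam - mu) * g mu =
        (f (lam - mu)) ^ (1/2 : ℝ) * ((f (lam - mu)) ^ (1/2 : ℝ) * g mu) := by
      intro mu
      rw [← mul_assoc, ← ENNReal.rpow_add_of_nonneg _ _ (by norm_num) (by norm_num)]
      norm_num
    have hu2 : ∀ mu, ((f (lam - mu)) ^ (1/2 : ℝ)) ^ 2 = f (lam - mu) := by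
      intro mu
      rw [← ENNReal.rpow_natCast (_ ^ (1/2:ℝ)), ← ENNReal.rpow_mul]
      norm_num
    calc (∑' mu, f (lam - mu) * g mu) ^ 2
        = (∑' mu, (f (lam - mu)) ^ (1/2 : ℝ) * ((f (lam - mu)) ^ (1/2 : ℝ) * g mu)) ^ 2 := by
          simp_rw [← hsplit]
      _ ≤ (∑' mu, ((f (lam - mu)) ^ (1/2 : ℝ)) ^ 2) *
            (∑' mu, ((f (lam - mu)) ^ (1/2 : ℝ) * g mu) ^ 2) := tsum_mul_sq_le_st6 _ _
      _ = S * ∑' mu, f (lam - mu) * g mu ^ 2 := by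
          simp_rw [mul_pow, hu2, hshift]
  calc ∑' lam, (∑' mu, f (lam - mu) * g mu) ^ 2
      ≤ ∑' lam, S * ∑' mu, f (lam - mu) * g mu ^ 2 := ENNReal.tsum_le_tsum step1
    _ = S * ∑' lam, ∑' mu, f (lam - mu) * g mu ^ 2 := ENNReal.tsum_mul_left
    _ = S * ∑' mu, ∑' lam, f (lam - mu) * g mu ^ 2 := by rw [ENNReal.tsum_comm]
    _ = S * ∑' mu, S * g mu ^ 2 := by
        congr 1
        refine tsum_congr fun mu => ?_
        rw [ENNReal.tsum_mul_right, hshift']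
    _ = S ^ 2 * ∑' mu, g mu ^ 2 := by
        rw [ENNReal.tsum_mul_left]
        ring

lemma entry_le_st6 {Λ : Type} [AddCommGroup Λ] {M : Λ → Λ → ℂ} {a : Λ → ℝ}
    (hdom : ∀ mu, diagSup M mu ≤ ENNReal.ofReal (a mu)) (lam mu : Λ) :
    ‖M lam mu‖ ≤ |a (lam - mu)| := by
  have h1 : (‖M lam mu‖₊ : ℝ≥0∞) ≤ diagSup M (lam - mu) := by
    have hmu : mu = lam - (lam - mu) := by abel
    calc (‖M lam mu‖₊ : ℝ≥0∞) = ‖M lam (lam - (lam - mu))‖₊ := by rw [← hmu]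
      _ ≤ diagSup M (lam - mu) := le_iSup (fun l => (‖M l (l - (lam - mu))‖₊ : ℝ≥0∞)) lam
  have h2 : (‖M lam mu‖₊ : ℝ≥0∞) ≤ ENNReal.ofReal |a (lam - mu)| :=
    (h1.trans (hdom _)).trans (ENNReal.ofReal_le_ofReal (le_abs_self _))
  have h3 := ENNReal.toReal_mono ENNReal.ofReal_ne_top h2
  rwa [ENNReal.coe_toReal, coe_nnnorm, ENNReal.toReal_ofReal (abs_nonneg _)] at h3

/-- Core estimate for part 1: fixed dominating sequence. -/
lemma core1_st6 {Λ : Type} [AddCommGroup Λ] (A : SolidConvAlgebra Λ) (Y : SolidSeqSpace Λ)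
    (hAct : ∀ a c : Λ → ℂ, A.Mem a → Y.Mem c →
      (∀ lam : Λ, Summable (fun mu => a (lam - mu) * c mu)) ∧
      Y.Mem (fun lam => ∑' mu : Λ, a (lam - mu) * c mu) ∧
      Y.N (fun lam => ∑' mu : Λ, a (lam - mu) * c mu) ≤ A.N a * Y.N c)
    (M : Λ → Λ → ℂ) (a : Λ → ℝ) (ha : A.Mem (fun lam => (a lam : ℂ)))
    (hdom : ∀ mu, diagSup M mu ≤ ENNReal.ofReal (a mu))
    (c : Λ → ℂ) (hc : Y.Mem c) :
    (∀ lam : Λ, Summable (fun mu => M lam mu * c mu)) ∧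
    Y.Mem (fun lam => ∑' mu : Λ, M lam mu * c mu) ∧
    Y.N (fun lam => ∑' mu : Λ, M lam mu * c mu) ≤ A.N (fun lam => (a lam : ℂ)) * Y.N c := by
  set a' : Λ → ℂ := fun nu => ((|a nu| : ℝ) : ℂ) with ha'def
  set c' : Λ → ℂ := fun mu => ((‖c mu‖ : ℝ) : ℂ) with hc'def
  have ha' : A.Mem a' ∧ A.N a' ≤ A.N (fun lam => (a lam : ℂ)) :=
    A.solid ha (fun lam => by simp [a'])
  have hc' : Y.Mem c' ∧ Y.N c' ≤ Y.N c :=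
    Y.solid hc (fun lam => by simp [c'])
  obtain ⟨hS, hMemConv, hNConv⟩ := hAct a' c' ha'.1 hc'.1
  have hRS : ∀ lam, Summable (fun mu => |a (lam - mu)| * ‖c mu‖) := by
    intro lam
    have h := summable_norm_iff.mpr (hS lam)
    simpa [a', c', norm_mul, abs_of_nonneg, norm_norm] using h
  have hbd : ∀ lam mu, ‖M lam mu * c mu‖ ≤ |a (lam - mu)| * ‖c mu‖ := fun lam mu => by
    rw [norm_mul]
    exact mul_le_mul_of_nonneg_right (entry_le_st6 hdom lam mu) (norm_nonneg _)
  have hnorm : ∀ lam, Summable (fun mu => ‖M lam mu * c mu‖) := fun lam =>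
    Summable.of_nonneg_of_le (fun _ => norm_nonneg _) (hbd lam) (hRS lam)
  have hsum : ∀ lam, Summable (fun mu => M lam mu * c mu) := fun lam =>
    Summable.of_norm (hnorm lam)
  have hconv_eq : ∀ lam, (∑' mu, a' (lam - mu) * c' mu) =
      ((∑' mu, |a (lam - mu)| * ‖c mu‖ : ℝ) : ℂ) := by
    intro lam
    rw [Complex.ofReal_tsum]
    push_cast
    rfl
  have hdom_pt : ∀ lam, ‖∑' mu, M lam mu * c mu‖ ≤ ‖∑' mu, a' (lam - mu) * c' mu‖ := by
    intro lam
    calc ‖∑' mu, M lam mu * c mu‖ ≤ ∑' mu, ‖M lam mu * c mu‖ :=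
          norm_tsum_le_tsum_norm (hnorm lam)
      _ ≤ ∑' mu, |a (lam - mu)| * ‖c mu‖ := Summable.tsum_le_tsum (hbd lam) (hnorm lam) (hRS lam)
      _ ≤ ‖∑' mu, a' (lam - mu) * c' mu‖ := by
          rw [hconv_eq lam, Complex.norm_real, Real.norm_eq_abs]
          exact le_abs_self _
  obtain ⟨hMem, hN⟩ := Y.solid hMemConv hdom_pt
  refine ⟨hsum, hMem, hN.trans (hNConv.trans ?_)⟩
  exact mul_le_mul ha'.2 hc'.2 (Y.N_nonneg _) (A.N_nonneg _)

/-- Core estimate for part 2: fixed dominating sequence, `ℓ²` bound. -/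
lemma core2_st6 {Λ : Type} [AddCommGroup Λ] (A : SolidConvAlgebra Λ)
    (hl1 : ∀ b : Λ → ℂ, A.Mem b →
      Summable (fun lam => ‖b lam‖) ∧ ∑' lam : Λ, ‖b lam‖ ≤ A.N b)
    (M : Λ → Λ → ℂ) (a : Λ → ℝ) (ha : A.Mem (fun lam => (a lam : ℂ)))
    (hdom : ∀ mu, diagSup M mu ≤ ENNReal.ofReal (a mu))
    (c : Λ → ℂ) (hc2 : Summable (fun mu => ‖c mu‖ ^ 2)) :
    (∀ lam : Λ, Summable (fun mu => M lam mu * c mu)) ∧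
    Summable (fun lam : Λ => ‖∑' mu : Λ, M lam mu * c mu‖ ^ 2) ∧
    Real.sqrt (∑' lam : Λ, ‖∑' mu : Λ, M lam mu * c mu‖ ^ 2) ≤
      A.N (fun lam => (a lam : ℂ)) * Real.sqrt (∑' mu : Λ, ‖c mu‖ ^ 2) := by
  obtain ⟨hA1, hA2⟩ := hl1 _ ha
  have hA1' : Summable (fun nu => |a nu|) := by
    simpa [Complex.norm_real, Real.norm_eq_abs] using hA1
  set T : ℝ := ∑' mu, ‖c mu‖ ^ 2 with hT
  have hT0 : 0 ≤ T := tsum_nonneg fun _ => sq_nonneg _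
  -- pointwise bound for c
  have hcbd : ∀ mu, ‖c mu‖ ≤ max 1 T := by
    intro mu
    rcases le_or_gt ‖c mu‖ 1 with h | h
    · exact h.trans (le_max_left _ _)
    · refine le_trans ?_ (le_max_right _ _)
      calc ‖c mu‖ = ‖c mu‖ * 1 := (mul_one _).symm
        _ ≤ ‖c mu‖ * ‖c mu‖ := by nlinarith
        _ = ‖c mu‖ ^ 2 := (sq (‖c mu‖)).symm
        _ ≤ T := Summable.le_tsum hc2 mu fun _ _ => sq_nonneg _
  have hRS : ∀ lam, Summable (fun mu => |a (lam - mu)| * ‖c mu‖) := by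
    intro lam
    have hshift : Summable (fun mu => |a (lam - mu)|) :=
      ((Equiv.subLeft lam).summable_iff).mpr hA1'
    refine Summable.of_nonneg_of_le
      (fun mu => mul_nonneg (abs_nonneg _) (norm_nonneg _))
      (fun mu => mul_le_mul_of_nonneg_left (hcbd mu) (abs_nonneg _))
      (hshift.mul_right (max 1 T))
  have hbd : ∀ lam mu, ‖M lam mu * c mu‖ ≤ |a (lam - mu)| * ‖c mu‖ := fun lam mu => by
    rw [norm_mul]
    exact mul_le_mul_of_nonneg_right (entry_le_st6 hdom lam mu) (norm_nonneg _)
  have hnorm : ∀ lam, Summable (fun mu => ‖M lam mu * c mu‖) := fun lam =>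
    Summable.of_nonneg_of_le (fun _ => norm_nonneg _) (hbd lam) (hRS lam)
  have hsum : ∀ lam, Summable (fun mu => M lam mu * c mu) := fun lam =>
    Summable.of_norm (hnorm lam)
  -- ENNReal side
  set f : Λ → ℝ≥0∞ := fun nu => ENNReal.ofReal |a nu| with hf
  set g : Λ → ℝ≥0∞ := fun mu => ENNReal.ofReal ‖c mu‖ with hg
  set Sa : ℝ := ∑' nu, |a nu| with hSa
  have hSa0 : 0 ≤ Sa := tsum_nonneg fun _ => abs_nonneg _
  have hfS : ∑' nu, f nu = ENNReal.ofReal Sa :=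
    (ENNReal.ofReal_tsum_of_nonneg (fun _ => abs_nonneg _) hA1').symm
  have hg2 : ∑' mu, g mu ^ 2 = ENNReal.ofReal T := by
    rw [hT, ENNReal.ofReal_tsum_of_nonneg (fun _ => sq_nonneg _) hc2]
    exact tsum_congr fun mu => by
      rw [hg, ← ENNReal.ofReal_pow (norm_nonneg _)]
  have hpt : ∀ lam, ENNReal.ofReal ‖∑' mu, M lam mu * c mu‖ ≤
      ∑' mu, f (lam - mu) * g mu := by
    intro lam
    have h1 : ‖∑' mu, M lam mu * c mu‖ ≤ ∑' mu, |a (lam - mu)| * ‖c mu‖ :=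
      (norm_tsum_le_tsum_norm (hnorm lam)).trans
        (Summable.tsum_le_tsum (hbd lam) (hnorm lam) (hRS lam))
    calc ENNReal.ofReal ‖∑' mu, M lam mu * c mu‖
        ≤ ENNReal.ofReal (∑' mu, |a (lam - mu)| * ‖c mu‖) := ENNReal.ofReal_le_ofReal h1
      _ = ∑' mu, f (lam - mu) * g mu := by
          rw [ENNReal.ofReal_tsum_of_nonneg
            (fun mu => mul_nonneg (abs_nonneg _) (norm_nonneg _)) (hRS lam)]
          exact tsum_congr fun mu =>
            ENNReal.ofReal_mul (abs_nonneg _)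
  have hkey : ∑' lam, (ENNReal.ofReal ‖∑' mu, M lam mu * c mu‖) ^ 2 ≤
      ENNReal.ofReal Sa ^ 2 * ENNReal.ofReal T := by
    calc ∑' lam, (ENNReal.ofReal ‖∑' mu, M lam mu * c mu‖) ^ 2
        ≤ ∑' lam, (∑' mu, f (lam - mu) * g mu) ^ 2 :=
          ENNReal.tsum_le_tsum fun lam => pow_le_pow_left' (hpt lam) 2
      _ ≤ (∑' nu, f nu) ^ 2 * ∑' mu, g mu ^ 2 := conv_sq_bound_st6 f g
      _ = ENNReal.ofReal Sa ^ 2 * ENNReal.ofReal T := by rw [hfS, hg2]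
  have hfin : ∑' lam, (ENNReal.ofReal ‖∑' mu, M lam mu * c mu‖) ^ 2 ≠ ⊤ :=
    ne_top_of_le_ne_top (ENNReal.mul_ne_top (ENNReal.pow_ne_top ENNReal.ofReal_ne_top) ENNReal.ofReal_ne_top) hkey
  have hcoe : ∀ lam : Λ, (ENNReal.ofReal ‖∑' mu, M lam mu * c mu‖) ^ 2 =
      ((‖∑' mu, M lam mu * c mu‖₊ ^ 2 : ℝ≥0) : ℝ≥0∞) := by
    intro lam
    rw [ofReal_norm, enorm_eq_nnnorm, ← ENNReal.coe_pow]
  have hnn : Summable (fun lam : Λ => (‖∑' mu, M lam mu * c mu‖₊ ^ 2 : ℝ≥0)) := by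
    rw [← ENNReal.tsum_coe_ne_top_iff_summable]
    simpa only [← hcoe] using hfin
  have hsq : Summable (fun lam : Λ => ‖∑' mu, M lam mu * c mu‖ ^ 2) := by
    have := NNReal.summable_coe.mpr hnn
    simpa [NNReal.coe_pow, coe_nnnorm] using this
  refine ⟨hsum, hsq, ?_⟩
  have htsum_eq : ENNReal.ofReal (∑' lam, ‖∑' mu, M lam mu * c mu‖ ^ 2) =
      ∑' lam, (ENNReal.ofReal ‖∑' mu, M lam mu * c mu‖) ^ 2 := by
    rw [ENNReal.ofReal_tsum_of_nonneg (fun _ => sq_nonneg _) hsq]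
    exact tsum_congr fun lam => ENNReal.ofReal_pow (norm_nonneg _) 2
  have hreal : (∑' lam, ‖∑' mu, M lam mu * c mu‖ ^ 2) ≤ Sa ^ 2 * T := by
    rw [← ENNReal.ofReal_le_ofReal_iff (by positivity), htsum_eq]
    calc ∑' lam, (ENNReal.ofReal ‖∑' mu, M lam mu * c mu‖) ^ 2
        ≤ ENNReal.ofReal Sa ^ 2 * ENNReal.ofReal T := hkey
      _ = ENNReal.ofReal (Sa ^ 2 * T) := by
          rw [ENNReal.ofReal_mul (by positivity), ENNReal.ofReal_pow hSa0]
  have hSale : Sa ≤ A.N (fun lam => (a lam : ℂ)) := by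
    refine le_trans (le_of_eq ?_) hA2
    exact tsum_congr fun nu => by simp [Complex.norm_real, Real.norm_eq_abs]
  calc Real.sqrt (∑' lam, ‖∑' mu, M lam mu * c mu‖ ^ 2)
      ≤ Real.sqrt (Sa ^ 2 * T) := Real.sqrt_le_sqrt hreal
    _ = Sa * Real.sqrt T := by
        rw [Real.sqrt_mul (sq_nonneg _), Real.sqrt_sq hSa0]
    _ ≤ A.N (fun lam => (a lam : ℂ)) * Real.sqrt T :=
        mul_le_mul_of_nonneg_right hSale (Real.sqrt_nonneg _)

lemma inf_step_st6 (S : Set ℝ) (hne : S.Nonempty) (L R : ℝ) (hL : 0 ≤ L) (hR : 0 ≤ R)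
    (h : ∀ r ∈ S, L ≤ r * R) : L ≤ sInf S * R := by
  rcases hR.eq_or_lt with h0 | h0
  · obtain ⟨r, hr⟩ := hne
    have h1 := h r hr
    rw [← h0, mul_zero] at h1 ⊢
    linarith
  · have hd : L / R ≤ sInf S := le_csInf hne fun r hr => (div_le_iff₀ h0).mpr (h r hr)
    exact (div_le_iff₀ h0).mp hd


/-- If the solid convolution Banach algebra `A` acts boundedly by
convolution on a solid Banach sequence space `Y` over the lattice `Λ`
(`‖a * c‖_Y ≤ ‖a‖_A ‖c‖_Y`), then every matrix `M ∈ C_A` acts boundedly on `Y` with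
`‖Mc‖_Y ≤ ‖M‖_{C_A} ‖c‖_Y`.  In particular (taking `Y = ℓ²(Λ)`, using that
`A ⊆ ℓ¹(Λ)`), `C_A` acts boundedly on `ℓ²(Λ)`. -/
theorem statement6 {d : ℕ} (B : Matrix (Fin d) (Fin d) ℝ) (hB : IsUnit B.det)
    (A : SolidConvAlgebra ↥(lattice B)) (Y : SolidSeqSpace ↥(lattice B))
    (hAct : ∀ a c : ↥(lattice B) → ℂ, A.Mem a → Y.Mem c →
      (∀ lam : ↥(lattice B), Summable (fun mu => a (lam - mu) * c mu)) ∧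
      Y.Mem (fun lam => ∑' mu : ↥(lattice B), a (lam - mu) * c mu) ∧
      Y.N (fun lam => ∑' mu : ↥(lattice B), a (lam - mu) * c mu) ≤ A.N a * Y.N c) :
    (∀ M : ↥(lattice B) → ↥(lattice B) → ℂ, MemCA A M →
      ∀ c : ↥(lattice B) → ℂ, Y.Mem c →
        (∀ lam : ↥(lattice B), Summable (fun mu => M lam mu * c mu)) ∧
        Y.Mem (fun lam => ∑' mu : ↥(lattice B), M lam mu * c mu) ∧
        Y.N (fun lam => ∑' mu : ↥(lattice B), M lam mu * c mu) ≤ CAnorm A M * Y.N c) ∧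
    ((∀ a : ↥(lattice B) → ℂ, A.Mem a →
        Summable (fun lam => ‖a lam‖) ∧ ∑' lam : ↥(lattice B), ‖a lam‖ ≤ A.N a) →
      ∀ M : ↥(lattice B) → ↥(lattice B) → ℂ, MemCA A M →
        ∀ c : ↥(lattice B) → ℂ, Summable (fun mu => ‖c mu‖ ^ 2) →
          (∀ lam : ↥(lattice B), Summable (fun mu => M lam mu * c mu)) ∧
          Summable (fun lam : ↥(lattice B) =>
            ‖∑' mu : ↥(lattice B), M lam mu * c mu‖ ^ 2) ∧
          Real.sqrt (∑' lam : ↥(lattice B), ‖∑' mu : ↥(lattice B), M lam mu * c mu‖ ^ 2) ≤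
            CAnorm A M * Real.sqrt (∑' mu : ↥(lattice B), ‖c mu‖ ^ 2)) := by
  constructor
  · intro M hM c hc
    obtain ⟨a₀, ha₀, hdom₀⟩ := hM
    obtain ⟨hsum, hMem, _⟩ := core1_st6 A Y hAct M a₀ ha₀ hdom₀ c hc
    refine ⟨hsum, hMem, ?_⟩
    unfold CAnorm
    refine inf_step_st6 _ ?_ _ _ (Y.N_nonneg _) (Y.N_nonneg _) ?_
    · exact ⟨A.N (fun lam => (a₀ lam : ℂ)), a₀, ha₀, hdom₀, rfl⟩
    · rintro r ⟨a, ha, hdom, rfl⟩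
      exact (core1_st6 A Y hAct M a ha hdom c hc).2.2
  · intro hl1 M hM c hc2
    obtain ⟨a₀, ha₀, hdom₀⟩ := hM
    obtain ⟨hsum, hsq, _⟩ := core2_st6 A hl1 M a₀ ha₀ hdom₀ c hc2
    refine ⟨hsum, hsq, ?_⟩
    unfold CAnorm
    refine inf_step_st6 _ ?_ _ _ (Real.sqrt_nonneg _) (Real.sqrt_nonneg _) ?_
    · exact ⟨A.N (fun lam => (a₀ lam : ℂ)), a₀, ha₀, hdom₀, rfl⟩
    · rintro r ⟨a, ha, hdom, rfl⟩
      exact (core2_st6 A hl1 M a ha hdom c hc2).2.2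

end
end
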